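/- arXiv:1207.0535 — 2 statements merged into one kernel-verified Lean document; each statement's English description precedes it below -/
import Mathlib

section
/- Let K and L be regular languages with state complexities m and n. Then the state complexity of Lᴿ \ K is at most m·2ⁿ − (m − 1). -/
namespace SCPaper

/-- Reversal of a language. -/
def rev {α : Type} (L : Language α) : Language α := {w | w.reverse ∈ L}

/-- Union of two languages. -/
def lunion {α : Type} (K L : Language α) : Language α := {w | w ∈ K ∨ w ∈ L}

/-- Intersection of two languages. -/
def linter {α : Type} (K L : Language α) : Language α := {w | w ∈ K ∧ w ∈ L}

/-- Difference of two languages. -/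
def ldiff {α : Type} (K L : Language α) : Language α := {w | w ∈ K ∧ w ∉ L}

/-- Symmetric difference of two languages. -/
def lsymm {α : Type} (K L : Language α) : Language α := lunion (ldiff K L) (ldiff L K)

/-- Sizes (numbers of states) of complete DFAs recognizing `L`. -/
def complexitySet {α : Type} (L : Language α) : Set ℕ :=
  {n | ∃ M : DFA α (Fin n), M.accepts = L}

/-- A language is regular if it is recognized by some finite DFA. -/
def Regular {α : Type} (L : Language α) : Prop := (complexitySet L).Nonempty

/-- State complexity: the number of states of a minimal DFA for `L`. -/
noncomputable def sc {α : Type} (L : Language α) : ℕ := sInf (complexitySet L)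

/-- The cyclic permutation (0,1,…,n−1). -/
def cyc (n : ℕ) (i : Fin n) : Fin n :=
  ⟨(i.val + 1) % n, Nat.mod_lt _ (Nat.lt_of_le_of_lt (Nat.zero_le _) i.isLt)⟩

/-- The transposition (0,1). -/
def tp01 (n : ℕ) (i : Fin n) : Fin n :=
  if i.val = 0 then ⟨1 % n, Nat.mod_lt _ (Nat.lt_of_le_of_lt (Nat.zero_le _) i.isLt)⟩
  else if i.val = 1 then ⟨0, Nat.lt_of_le_of_lt (Nat.zero_le _) i.isLt⟩
  else i

/-- The singular map sending n−1 to 0 and fixing everything else. -/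
def sing (n : ℕ) (i : Fin n) : Fin n :=
  if i.val = n - 1 then ⟨0, Nat.lt_of_le_of_lt (Nat.zero_le _) i.isLt⟩ else i

/-- The transposition (n−2, n−1). -/
def tpTop (n : ℕ) (i : Fin n) : Fin n :=
  if i.val = n - 1 then ⟨n - 2, by have := i.isLt; omega⟩
  else if i.val = n - 2 then ⟨n - 1, by have := i.isLt; omega⟩
  else i

/-- The singular map sending n−1 to n−2 and fixing everything else. -/
def singTop (n : ℕ) (i : Fin n) : Fin n :=
  if i.val = n - 1 then ⟨n - 2, by have := i.isLt; omega⟩ else i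

/-- 𝒰ₙ(a,b,∅): binary alphabet, a = cycle (0,…,n−1), b = transposition (0,1),
initial state 0, final state n−1. -/
def U2dfa (n : ℕ) (h : 0 < n) : DFA (Fin 2) (Fin n) where
  step := fun i x => if x = 0 then cyc n i else tp01 n i
  start := ⟨0, h⟩
  accept := {i | i.val = n - 1}

def U2 (n : ℕ) (h : 0 < n) : Language (Fin 2) := (U2dfa n h).accepts

/-- 𝒰ₙ(a,b,c): a = cycle, b = transposition (0,1), c = (n−1 ↦ 0). -/
def Udfa (n : ℕ) (h : 0 < n) : DFA (Fin 3) (Fin n) where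
  step := fun i x => if x = 0 then cyc n i else if x = 1 then tp01 n i else sing n i
  start := ⟨0, h⟩
  accept := {i | i.val = n - 1}

def U (n : ℕ) (h : 0 < n) : Language (Fin 3) := (Udfa n h).accepts

/-- 𝒰ₙ(a,b,c) with final state set {0}. -/
def U0dfa (n : ℕ) (h : 0 < n) : DFA (Fin 3) (Fin n) where
  step := fun i x => if x = 0 then cyc n i else if x = 1 then tp01 n i else sing n i
  start := ⟨0, h⟩
  accept := {i | i.val = 0}

def U0 (n : ℕ) (h : 0 < n) : Language (Fin 3) := (U0dfa n h).accepts

/-- 𝒰ₙ(a,b,c,d): a = cycle, b = transposition (0,1), c = (n−1 ↦ 0), d = identity. -/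
def U4dfa (n : ℕ) (h : 0 < n) : DFA (Fin 4) (Fin n) where
  step := fun i x =>
    if x = 0 then cyc n i else if x = 1 then tp01 n i else if x = 2 then sing n i else i
  start := ⟨0, h⟩
  accept := {i | i.val = n - 1}

def U4 (n : ℕ) (h : 0 < n) : Language (Fin 4) := (U4dfa n h).accepts

/-- 𝒰ₙ(d,c,b,a): d = cycle, c = transposition (0,1), b = (n−1 ↦ 0), a = identity. -/
def U4dcbaDfa (n : ℕ) (h : 0 < n) : DFA (Fin 4) (Fin n) where
  step := fun i x =>
    if x = 3 then cyc n i else if x = 2 then tp01 n i else if x = 1 then sing n i else i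
  start := ⟨0, h⟩
  accept := {i | i.val = n - 1}

def U4dcba (n : ℕ) (h : 0 < n) : Language (Fin 4) := (U4dcbaDfa n h).accepts

/-- 𝒱ₙ(a,b,c,d): a = cycle, b = transposition (n−2,n−1), c = (n−1 ↦ n−2), d = identity. -/
def Vdfa (n : ℕ) (h : 0 < n) : DFA (Fin 4) (Fin n) where
  step := fun i x =>
    if x = 0 then cyc n i else if x = 1 then tpTop n i else if x = 2 then singTop n i else i
  start := ⟨0, h⟩
  accept := {i | i.val = n - 1}

def V (n : ℕ) (h : 0 < n) : Language (Fin 4) := (Vdfa n h).accepts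

/-- 𝒱ₙ(d,c,b,a): d = cycle, c = transposition (n−2,n−1), b = (n−1 ↦ n−2), a = identity. -/
def VdcbaDfa (n : ℕ) (h : 0 < n) : DFA (Fin 4) (Fin n) where
  step := fun i x =>
    if x = 3 then cyc n i else if x = 2 then tpTop n i else if x = 1 then singTop n i else i
  start := ⟨0, h⟩
  accept := {i | i.val = n - 1}

def Vdcba (n : ℕ) (h : 0 < n) : Language (Fin 4) := (VdcbaDfa n h).accepts

/-- Direct product of two DFAs with a chosen set of final states. -/
def prodDFA {α σ₁ σ₂ : Type} (M : DFA α σ₁) (N : DFA α σ₂) (acc : Set (σ₁ × σ₂)) :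
    DFA α (σ₁ × σ₂) where
  step := fun p x => (M.step p.1 x, N.step p.2 x)
  start := (M.start, N.start)
  accept := acc


/-- Chinese-remainder style pairing k ↦ (k mod m, k mod n). -/
def toPair (m n : ℕ) (hm : 0 < m) (hn : 0 < n) (k : Fin (m * n)) : Fin m × Fin n :=
  (⟨k.val % m, Nat.mod_lt _ hm⟩, ⟨k.val % n, Nat.mod_lt _ hn⟩)

/-- Componentwise successor on the product of two cyclic automata. -/
def prodSucc (m n : ℕ) (p : Fin m × Fin n) : Fin m × Fin n := (cyc m p.1, cyc n p.2)

/-- One-letter subset transition of the reversed NFA of 𝒰ₙ(a,b,c). -/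
def rstep (n : ℕ) (h : 0 < n) (S : Set (Fin n)) (x : Fin 3) : Set (Fin n) :=
  {q | (Udfa n h).step q x ∈ S}

/-- Action of a word on subsets in the reversed NFA of 𝒰ₙ(a,b,c). -/
def rword (n : ℕ) (h : 0 < n) (S : Set (Fin n)) (w : List (Fin 3)) : Set (Fin n) :=
  w.foldl (rstep n h) S

end SCPaper

open SCPaper

open SCPaper


namespace SCAux

open SCPaper

/-- Transport a DFA along an equivalence of state types. -/
def mapDFA {α σ τ : Type} (M : DFA α σ) (e : σ ≃ τ) : DFA α τ where
  step t x := e (M.step (e.symm t) x)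
  start := e M.start
  accept := e.symm ⁻¹' M.accept

/-- A DFA homomorphism preserves the accepted language. -/
lemma accepts_eq_of_hom {α σ τ : Type} (M : DFA α σ) (E : DFA α τ) (π : σ → τ)
    (hstep : ∀ s x, π (M.step s x) = E.step (π s) x)
    (hstart : π M.start = E.start)
    (hacc : ∀ s, s ∈ M.accept ↔ π s ∈ E.accept) :
    M.accepts = E.accepts := by
  have heval : ∀ (w : List α) (s : σ), π (M.evalFrom s w) = E.evalFrom (π s) w := by
    intro w
    induction w with
    | nil => intro s; simp [DFA.evalFrom]
    | cons x w ih =>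
      intro s
      simp only [DFA.evalFrom, List.foldl_cons] at *
      rw [ih, hstep]
  ext w
  simp only [DFA.mem_accepts, DFA.eval]
  rw [hacc, heval, hstart]

lemma sc_le_card {α σ : Type} [Fintype σ] (M : DFA α σ) :
    sc M.accepts ≤ Fintype.card σ := by
  apply Nat.sInf_le
  refine ⟨mapDFA M (Fintype.equivFin σ), ?_⟩
  refine (accepts_eq_of_hom M _ (Fintype.equivFin σ) ?_ ?_ ?_).symm
  · intro s x; simp [mapDFA]
  · rfl
  · intro s; simp [mapDFA]

/-- Product of a DFA for K with the determinized reversal of a DFA for L,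
accepting rev L \ K. -/
def revProd {α σ₁ σ₂ : Type} (M : DFA α σ₁) (N : DFA α σ₂) :
    DFA α (σ₁ × Set σ₂) where
  step p x := (M.step p.1 x, {q | N.step q x ∈ p.2})
  start := (M.start, N.accept)
  accept := {p | N.start ∈ p.2 ∧ p.1 ∉ M.accept}

lemma revProd_evalFrom {α σ₁ σ₂ : Type} (M : DFA α σ₁) (N : DFA α σ₂)
    (w : List α) (s : σ₁) (S : Set σ₂) :
    (revProd M N).evalFrom (s, S) w
      = (M.evalFrom s w, {q | N.evalFrom q w.reverse ∈ S}) := by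
  induction w generalizing s S with
  | nil => simp [DFA.evalFrom]
  | cons x w ih =>
    have h1 : (revProd M N).evalFrom (s, S) (x :: w)
        = (revProd M N).evalFrom ((M.step s x, {q | N.step q x ∈ S})) w := rfl
    rw [h1, ih]
    have h2 : (M.evalFrom (M.step s x) w) = M.evalFrom s (x :: w) := rfl
    rw [h2]
    congr 1
    ext q
    simp only [Set.mem_setOf_eq, List.reverse_cons]
    rw [DFA.evalFrom_append_singleton]

lemma revProd_accepts {α σ₁ σ₂ : Type} (M : DFA α σ₁) (N : DFA α σ₂) :
    (revProd M N).accepts = ldiff (rev N.accepts) M.accepts := by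
  ext w
  simp only [DFA.mem_accepts, DFA.eval]
  rw [show (revProd M N).start = (M.start, N.accept) from rfl, revProd_evalFrom]
  simp only [revProd, Set.mem_setOf_eq]
  constructor
  · rintro ⟨h1, h2⟩
    exact ⟨h1, h2⟩
  · rintro ⟨h1, h2⟩
    exact ⟨h1, h2⟩

open Classical in
/-- The collapsed product automaton: all states with empty subset component
are merged into a single dead state. -/
noncomputable def collapse {α σ₁ σ₂ : Type} (M : DFA α σ₁) (N : DFA α σ₂) :
    DFA α (Option (σ₁ × {S : Set σ₂ // S.Nonempty})) where
  step p x :=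
    match p with
    | none => none
    | some (s, S) =>
      if h : {q | N.step q x ∈ S.val}.Nonempty
      then some (M.step s x, ⟨_, h⟩) else none
  start := if h : N.accept.Nonempty then some (M.start, ⟨N.accept, h⟩) else none
  accept := {p | ∃ s S, p = some (s, S) ∧ N.start ∈ S.val ∧ s ∉ M.accept}

open Classical in
noncomputable def proj {σ₁ σ₂ : Type} (p : σ₁ × Set σ₂) :
    Option (σ₁ × {S : Set σ₂ // S.Nonempty}) :=
  if h : p.2.Nonempty then some (p.1, ⟨p.2, h⟩) else none

lemma collapse_accepts {α σ₁ σ₂ : Type} (M : DFA α σ₁) (N : DFA α σ₂) :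
    (collapse M N).accepts = (revProd M N).accepts := by
  classical
  refine (accepts_eq_of_hom (revProd M N) (collapse M N) proj ?_ ?_ ?_).symm
  · rintro ⟨s, S⟩ x
    by_cases hS : S.Nonempty
    · simp only [proj, revProd, collapse, hS, dif_pos]
      exact dite_congr rfl (fun _ => rfl) (fun _ => rfl)
    · have hempty : S = ∅ := Set.not_nonempty_iff_eq_empty.mp hS
      subst hempty
      have hT : ({q | N.step q x ∈ (∅ : Set σ₂)} : Set σ₂) = ∅ := by
        ext q; simp
      simp only [proj, revProd, collapse, hT]
      simp
  · simp only [proj, revProd, collapse]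
    exact dite_congr rfl (fun _ => rfl) (fun _ => rfl)
  · rintro ⟨s, S⟩
    by_cases hS : S.Nonempty
    · simp only [proj, hS, dif_pos, revProd, collapse, Set.mem_setOf_eq]
      constructor
      · rintro ⟨h1, h2⟩
        exact ⟨s, ⟨S, hS⟩, rfl, h1, h2⟩
      · rintro ⟨s', S', hEq, h1, h2⟩
        obtain ⟨rfl, rfl⟩ : s = s' ∧ (⟨S, hS⟩ : {S : Set σ₂ // S.Nonempty}) = S' := by
          have := Option.some.inj hEq
          exact ⟨congrArg Prod.fst this, congrArg Prod.snd this⟩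
        exact ⟨h1, h2⟩
    · have hempty : S = ∅ := Set.not_nonempty_iff_eq_empty.mp hS
      subst hempty
      simp [proj, revProd, collapse, hS]

end SCAux

theorem reversed_diff_left_upper_bound {α : Type} (K L : Language α) (m n : ℕ)
    (hK : Regular K) (hL : Regular L) (hm : sc K = m) (hn : sc L = n) :
    sc (ldiff (rev L) K) ≤ m * 2 ^ n - (m - 1) := by
  classical
  have hKm : m ∈ complexitySet K := hm ▸ Nat.sInf_mem hK
  have hLn : n ∈ complexitySet L := hn ▸ Nat.sInf_mem hL
  obtain ⟨M, hM⟩ := hKm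
  obtain ⟨N, hN⟩ := hLn
  have hm1 : 1 ≤ m := by
    rcases Nat.eq_zero_or_pos m with h | h
    · exfalso; subst h; exact Fin.elim0 M.start
    · exact h
  have hacc : (SCAux.collapse M N).accepts = ldiff (rev L) K := by
    rw [SCAux.collapse_accepts, SCAux.revProd_accepts, hM, hN]
  have hle := SCAux.sc_le_card (SCAux.collapse M N)
  rw [hacc] at hle
  refine hle.trans ?_
  have hcard : Fintype.card (Option (Fin m × {S : Set (Fin n) // S.Nonempty}))
      = m * Fintype.card {S : Set (Fin n) // S.Nonempty} + 1 := by
    simp [Fintype.card_option, Fintype.card_prod]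
  have hsub : Fintype.card {S : Set (Fin n) // S.Nonempty} < 2 ^ n := by
    have := Fintype.card_subtype_lt (α := Set (Fin n)) (p := Set.Nonempty)
      (x := ∅) (by simp)
    simpa [Fintype.card_set] using this
  rw [hcard]
  have h1 : Fintype.card {S : Set (Fin n) // S.Nonempty} ≤ 2 ^ n - 1 := by omega
  have h2 : m * Fintype.card {S : Set (Fin n) // S.Nonempty} ≤ m * (2 ^ n - 1) :=
    Nat.mul_le_mul_left m h1
  have h3 : m * (2 ^ n - 1) = m * 2 ^ n - m := by
    rw [Nat.mul_sub, Nat.mul_one]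
  have h4 : m ≤ m * 2 ^ n := by
    calc m = m * 1 := (Nat.mul_one m).symm
    _ ≤ m * 2 ^ n := Nat.mul_le_mul_left m Nat.one_le_two_pow
  omega
end

section
/- Let m, n ≥ 3 with m ≠ n. Then the state complexity of Uₘ(a,b,∅) ∪ Uₙ(a,b,∅) is exactly mn, where Uₖ(a,b,∅) is the language of the k-state DFA over {a, b} with states {0,…,k−1}, initial state 0, final state k−1, in which a acts as the cycle (0,1,…,k−1) and b as the transposition (0,1). -/
open SCPaper

open SCPaper

namespace SCAux

open SCPaper

/-- word of `t` letters `a` -/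
def aw (t : ℕ) : List (Fin 2) := List.replicate t 0

/-- value-level transposition (0 1) -/
def tpv (r : ℕ) : ℕ := if r = 0 then 1 else if r = 1 then 0 else r

lemma mod2 {x n : ℕ} (hn : 0 < n) (h : x < 2*n) :
    (x < n ∧ x % n = x) ∨ (n ≤ x ∧ x % n = x - n) := by
  rcases lt_or_ge x n with h1 | h1
  · exact Or.inl ⟨h1, Nat.mod_eq_of_lt h1⟩
  · exact Or.inr ⟨h1, by rw [Nat.mod_eq_sub_mod h1, Nat.mod_eq_of_lt (by omega)]⟩

lemma cancelmod {k x y : ℕ} (t : ℕ) (h : (x + t) % k = (y + t) % k) : x % k = y % k :=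
  Nat.ModEq.add_right_cancel' t h

lemma addmod (k x T c : ℕ) (hT : T % k = c) : (x + T) % k = (x + c) % k := by
  rw [Nat.add_mod x T k, hT, Nat.mod_add_mod]

lemma dvd_of_modshift (m n x : ℕ) (h0m : 0 < m) (h : (x + n) % m = x % m) : m ∣ n := by
  apply Nat.dvd_of_mod_eq_zero
  have h1 : (x + n) % m = (x % m + n % m) % m := Nat.add_mod x n m
  have h2 : x % m < m := Nat.mod_lt _ h0m
  have h3 : n % m < m := Nat.mod_lt _ h0m
  rcases mod2 h0m (show x % m + n % m < 2*m by omega) with ⟨h4, h5⟩ | ⟨h4, h5⟩ <;> omega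

/- ## Automaton evaluation lemmas -/

lemma evalFrom_aw (k : ℕ) (hk : 0 < k) (s : Fin k) (t : ℕ) :
    ((U2dfa k hk).evalFrom s (aw t)).val = (s.val + t) % k := by
  induction t generalizing s with
  | zero => simpa [aw] using (Nat.mod_eq_of_lt s.isLt).symm
  | succ t ih =>
    have h1 : aw (t+1) = (0 : Fin 2) :: aw t := List.replicate_succ
    have h2 : (U2dfa k hk).evalFrom s (aw (t+1))
        = (U2dfa k hk).evalFrom (cyc k s) (aw t) := by rw [h1]; rfl
    rw [h2, ih]
    show ((s.val + 1) % k + t) % k = (s.val + (t+1)) % k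
    rw [Nat.mod_add_mod]; congr 1; omega

lemma step1_val (k : ℕ) (hk : 0 < k) (hk3 : 3 ≤ k) (s : Fin k) :
    ((U2dfa k hk).step s 1).val = tpv s.val := by
  have h : (U2dfa k hk).step s 1 = tp01 k s := by
    show (if (1 : Fin 2) = 0 then cyc k s else tp01 k s) = tp01 k s
    norm_num
  rw [h]
  unfold tp01 tpv
  split_ifs
  · exact Nat.mod_eq_of_lt (by omega)
  · rfl
  · rfl

lemma eval_tbt (k : ℕ) (hk : 0 < k) (hk3 : 3 ≤ k) (s : Fin k) (t t₂ : ℕ) :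
    ((U2dfa k hk).evalFrom s (aw t ++ [1] ++ aw t₂)).val
      = (tpv ((s.val + t) % k) + t₂) % k := by
  rw [DFA.evalFrom_of_append, DFA.evalFrom_of_append, DFA.evalFrom_singleton,
    evalFrom_aw, step1_val k hk hk3, evalFrom_aw]

lemma mem_U2 (k : ℕ) (hk : 0 < k) (w : List (Fin 2)) :
    w ∈ U2 k hk ↔ ((U2dfa k hk).eval w).val = k - 1 := Iff.rfl

/- ## Reachability -/

lemma key1 (m n p q : ℕ) (hm : 3 ≤ m) (hlt : m < n) (hp : p < m) (hq : q < n) :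
    ∃ t, t ≤ 3*m ∧ t % m = (m - p) % m ∧ 2 ≤ (q + t) % n := by
  by_cases h0 : 2 ≤ (q + (m - p)) % n
  · exact ⟨m - p, by omega, rfl, h0⟩
  by_cases h1 : 2 ≤ (q + ((m - p) + m)) % n
  · exact ⟨(m - p) + m, by omega, by rw [Nat.add_mod_right], h1⟩
  by_cases h2 : 2 ≤ (q + ((m - p) + m + m)) % n
  · exact ⟨(m - p) + m + m, by omega, by rw [Nat.add_mod_right, Nat.add_mod_right], h2⟩
  exfalso
  push_neg at h0 h1 h2
  have h0n : 0 < n := by omega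
  set v0 := (q + (m - p)) % n with hv0
  have hv0lt : v0 < n := Nat.mod_lt _ h0n
  have e1 : (q + ((m - p) + m)) % n = (v0 + m) % n := by
    rw [hv0, Nat.mod_add_mod]; congr 1; omega
  have e2a : ((v0 + m) % n + m) % n = (v0 + m + m) % n := Nat.mod_add_mod _ _ _
  have e2b : (v0 + m + m) % n = (q + ((m - p) + m + m)) % n := by
    have h9 : v0 + m + m = v0 + (m + m) := by omega
    rw [h9, hv0, Nat.mod_add_mod]
    congr 1; omega
  have e2 : (q + ((m - p) + m + m)) % n = ((v0 + m) % n + m) % n :=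
    e2b.symm.trans e2a.symm
  rcases mod2 h0n (show v0 + m < 2*n by omega) with ⟨ha, hb⟩ | ⟨ha, hb⟩
  · omega
  · have hlt2 : (v0 + m) % n < n := Nat.mod_lt _ h0n
    rcases mod2 h0n (show (v0 + m) % n + m < 2*n by omega) with ⟨hc, hd⟩ | ⟨hc, hd⟩ <;> omega

lemma inc (m n : ℕ) (hm : 3 ≤ m) (hn : 3 ≤ n) (hlt : m < n) (h0m : 0 < m) (h0n : 0 < n)
    (p q : ℕ) (hp : p < m) (hq : q < n) :
    ∃ u : List (Fin 2), ∀ (s : Fin m) (s' : Fin n), s.val = p → s'.val = q →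
      ((U2dfa m h0m).evalFrom s u).val = (p + 1) % m ∧
      ((U2dfa n h0n).evalFrom s' u).val = q := by
  obtain ⟨t, ht3, htm, htn⟩ := key1 m n p q hm hlt hp hq
  have h3mn : 3*m ≤ m*n := by
    calc 3*m = m*3 := Nat.mul_comm 3 m
    _ ≤ m*n := Nat.mul_le_mul_left m hn
  have htmn : t ≤ m*n := by omega
  refine ⟨aw t ++ [1] ++ aw (m*n - t), fun s s' hs hs' => ⟨?_, ?_⟩⟩
  · rw [eval_tbt m h0m hm, hs]
    have h1 : (p + t) % m = 0 := by
      rw [addmod m p t _ htm, Nat.add_mod_mod]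
      have : p + (m - p) = m := by omega
      rw [this, Nat.mod_self]
    rw [h1]
    have h2 : tpv 0 = 1 := rfl
    rw [h2]
    apply cancelmod t
    have e1 : 1 + (m*n - t) + t = 1 + m*n := by omega
    rw [e1, Nat.add_mul_mod_self_left]
    rw [addmod m (p + 1) t _ htm, Nat.add_mod_mod]
    have e2 : p + 1 + (m - p) = m + 1 := by omega
    rw [e2, Nat.add_comm m 1, Nat.add_mod_right]
  · rw [eval_tbt n h0n hn, hs']
    have h1 : tpv ((q + t) % n) = (q + t) % n := by
      unfold tpv; rw [if_neg (by omega), if_neg (by omega)]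
    rw [h1]
    have h2 : ((q + t) % n + (m*n - t) + t) % n = (q + t) % n := by
      have e1 : (q + t) % n + (m*n - t) + t = (q + t) % n + m*n := by omega
      rw [e1, Nat.add_mul_mod_self_right, Nat.mod_eq_of_lt (Nat.mod_lt _ h0n)]
    have h3 := cancelmod (k := n) (x := (q + t) % n + (m*n - t)) (y := q) t h2
    rw [h3, Nat.mod_eq_of_lt hq]

lemma reach_aux (m n : ℕ) (hm : 3 ≤ m) (hn : 3 ≤ n) (hlt : m < n) (h0m : 0 < m) (h0n : 0 < n)
    (j : ℕ) (hj : j < n) (c : ℕ) :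
    ∃ w, ((U2dfa m h0m).eval w).val = (j + c) % m ∧ ((U2dfa n h0n).eval w).val = j := by
  induction c with
  | zero =>
    refine ⟨aw j, ?_, ?_⟩
    · have h := evalFrom_aw m h0m (U2dfa m h0m).start j
      have h2 : ((U2dfa m h0m).start.val + j) % m = (j + 0) % m := by
        have hs : (U2dfa m h0m).start.val = 0 := rfl
        rw [hs]; congr 1; omega
      exact h.trans h2
    · have h := evalFrom_aw n h0n (U2dfa n h0n).start j
      have h2 : ((U2dfa n h0n).start.val + j) % n = j := by
        have hs : (U2dfa n h0n).start.val = 0 := rfl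
        rw [hs, Nat.zero_add, Nat.mod_eq_of_lt hj]
      exact h.trans h2
  | succ c ih =>
    obtain ⟨w, hw1, hw2⟩ := ih
    obtain ⟨u, hu⟩ := inc m n hm hn hlt h0m h0n ((j+c) % m) j (Nat.mod_lt _ h0m) hj
    obtain ⟨hu1, hu2⟩ := hu ((U2dfa m h0m).eval w) ((U2dfa n h0n).eval w) hw1 hw2
    refine ⟨w ++ u, ?_, ?_⟩
    · have e : (U2dfa m h0m).eval (w ++ u)
          = (U2dfa m h0m).evalFrom ((U2dfa m h0m).eval w) u :=
        (U2dfa m h0m).evalFrom_of_append _ _ _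
      rw [e, hu1, Nat.mod_add_mod]; congr 1
    · have e : (U2dfa n h0n).eval (w ++ u)
          = (U2dfa n h0n).evalFrom ((U2dfa n h0n).eval w) u :=
        (U2dfa n h0n).evalFrom_of_append _ _ _
      rw [e, hu2]

lemma reach (m n : ℕ) (hm : 3 ≤ m) (hn : 3 ≤ n) (hlt : m < n) (h0m : 0 < m) (h0n : 0 < n)
    (i : Fin m) (j : Fin n) :
    ∃ w, (U2dfa m h0m).eval w = i ∧ (U2dfa n h0n).eval w = j := by
  obtain ⟨w, h1, h2⟩ := reach_aux m n hm hn hlt h0m h0n j.val j.isLt (i.val + m - j.val % m)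
  have hjm : j.val % m < m := Nat.mod_lt _ h0m
  have hjm2 : j.val % m ≤ j.val := Nat.mod_le _ _
  have hdm := Nat.div_add_mod j.val m
  have e0 : j.val + (i.val + m - j.val % m) = m * (j.val / m) + (i.val + m) := by omega
  refine ⟨w, Fin.ext ?_, Fin.ext ?_⟩
  · rw [h1, e0, Nat.mul_add_mod, Nat.add_mod_right, Nat.mod_eq_of_lt i.isLt]
  · rw [h2]

end SCAux

namespace SCAux

open SCPaper

/- ## Distinguishability arithmetic -/

lemma shift_cong (n j : ℕ) (hn : 0 < n) (hj : j < n) (T : ℕ) :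
    (j + T) % n = n - 1 ↔ T % n = n - 1 - j := by
  have h1 : (j + T) % n = (j + T % n) % n := Nat.add_mod_mod j T n ▸ rfl
  have hr : T % n < n := Nat.mod_lt _ hn
  rw [← Nat.add_mod_mod j T n]
  rcases mod2 hn (show j + T % n < 2*n by omega) with ⟨h2, h3⟩ | ⟨h2, h3⟩ <;> omega

lemma card_mod (d N c : ℕ) (hd : 0 < d) (hc : c < d) (hdvd : d ∣ N) :
    ((Finset.range N).filter (fun T => T % d = c)).card = N / d := by
  obtain ⟨K, rfl⟩ := hdvd
  have himg : ((Finset.range (d*K)).filter (fun T => T % d = c))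
      = (Finset.range K).image (fun k => k*d + c) := by
    ext T
    simp only [Finset.mem_filter, Finset.mem_range, Finset.mem_image]
    constructor
    · rintro ⟨hT, hmod⟩
      refine ⟨T / d, ?_, ?_⟩
      · rw [Nat.div_lt_iff_lt_mul hd, Nat.mul_comm]; exact hT
      · have h2 := Nat.div_add_mod T d
        have h3 : d * (T/d) = (T/d) * d := Nat.mul_comm _ _
        omega
    · rintro ⟨k, hk, rfl⟩
      have h4 : (k+1) * d ≤ K * d := Nat.mul_le_mul_right d hk
      have h5 : (k+1) * d = k*d + d := Nat.succ_mul k d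
      have h6 : K * d = d * K := Nat.mul_comm _ _
      refine ⟨by omega, ?_⟩
      rw [Nat.mul_comm k d, Nat.mul_add_mod]
      exact Nat.mod_eq_of_lt hc
  rw [himg, Finset.card_image_of_injective _
      (fun a b h => Nat.eq_of_mul_eq_mul_right hd (by omega : a * d = b * d)),
    Finset.card_range, Nat.mul_div_cancel_left _ hd]

lemma key2 (m n i i' j j' : ℕ) (hm : 3 ≤ m) (hn : 3 ≤ n) (hlt : m < n)
    (hi : i < m) (hi' : i' < m) (hj : j < n) (hj' : j' < n) (hii : i ≠ i') :
    ∃ T, ((i+T) % m = m-1 ∧ (i'+T) % m ≠ m-1 ∧ (j+T) % n ≠ n-1 ∧ (j'+T) % n ≠ n-1)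
       ∨ ((i'+T) % m = m-1 ∧ (i+T) % m ≠ m-1 ∧ (j+T) % n ≠ n-1 ∧ (j'+T) % n ≠ n-1) := by
  classical
  by_contra hcon
  push_neg at hcon
  have h0m : 0 < m := by omega
  have h0n : 0 < n := by omega
  have hacc : ∀ (x T : ℕ), x < m → T % m = m-1-x → (x+T) % m = m-1 := by
    intro x T hx hT
    rw [addmod m x T _ hT]
    have hxx : x + (m-1-x) = m-1 := by omega
    rw [hxx, Nat.mod_eq_of_lt (by omega)]
  have hrej : ∀ (x y T : ℕ), x < m → y < m → x ≠ y → T % m = m-1-x → (y+T) % m ≠ m-1 := by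
    intro x y T hx hy hxy hT
    rw [addmod m y T _ hT]
    rcases mod2 h0m (show y + (m-1-x) < 2*m by omega) with ⟨h1, h2⟩ | ⟨h1, h2⟩ <;> omega
  have hblock : ∀ T, (T % m = m-1-i ∨ T % m = m-1-i') →
      ((j+T) % n = n-1 ∨ (j'+T) % n = n-1) := by
    intro T hT
    by_contra hno
    push_neg at hno
    rcases hT with hT | hT
    · exact hno.2 ((hcon T).1 (hacc i T hi hT) (hrej i i' T hi hi' hii hT) hno.1)
    · exact hno.2 ((hcon T).2 (hacc i' T hi' hT) (hrej i' i T hi' hi (Ne.symm hii) hT) hno.1)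
  have hsub : (Finset.range (m*n)).filter (fun T => T % m = m-1-i ∨ T % m = m-1-i')
      ⊆ (Finset.range (m*n)).filter (fun T => T % n = n-1-j ∨ T % n = n-1-j') := by
    intro T hT
    rw [Finset.mem_filter] at hT ⊢
    refine ⟨hT.1, ?_⟩
    rcases hblock T hT.2 with h | h
    · exact Or.inl ((shift_cong n j h0n hj T).mp h)
    · exact Or.inr ((shift_cong n j' h0n hj' T).mp h)
  have d1 : ((Finset.range (m*n)).filter (fun T => T % m = m-1-i)).card = n := by
    rw [card_mod m (m*n) _ h0m (by omega) ⟨n, rfl⟩, Nat.mul_div_cancel_left _ h0m]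
  have d2 : ((Finset.range (m*n)).filter (fun T => T % m = m-1-i')).card = n := by
    rw [card_mod m (m*n) _ h0m (by omega) ⟨n, rfl⟩, Nat.mul_div_cancel_left _ h0m]
  have d3 : ((Finset.range (m*n)).filter (fun T => T % n = n-1-j)).card = m := by
    rw [card_mod n (m*n) _ h0n (by omega) ⟨m, Nat.mul_comm m n⟩]
    rw [Nat.mul_comm m n, Nat.mul_div_cancel_left _ h0n]
  have d4 : ((Finset.range (m*n)).filter (fun T => T % n = n-1-j')).card = m := by
    rw [card_mod n (m*n) _ h0n (by omega) ⟨m, Nat.mul_comm m n⟩]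
    rw [Nat.mul_comm m n, Nat.mul_div_cancel_left _ h0n]
  have hdisj : Disjoint ((Finset.range (m*n)).filter (fun T => T % m = m-1-i))
      ((Finset.range (m*n)).filter (fun T => T % m = m-1-i')) := by
    rw [Finset.disjoint_left]
    intro a ha hb
    rw [Finset.mem_filter] at ha hb
    omega
  have hcard1 : ((Finset.range (m*n)).filter
      (fun T => T % m = m-1-i ∨ T % m = m-1-i')).card = n + n := by
    rw [Finset.filter_or, Finset.card_union_of_disjoint hdisj, d1, d2]
  have hcard2 : ((Finset.range (m*n)).filter
      (fun T => T % n = n-1-j ∨ T % n = n-1-j')).card ≤ m + m := by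
    rw [Finset.filter_or]
    calc _ ≤ _ := Finset.card_union_le _ _
    _ = m + m := by rw [d3, d4]
  have := Finset.card_le_card hsub
  omega

lemma sub1 (m n i j K : ℕ) (hm : 3 ≤ m) (hK : n = m * K) (hi : i < m) (hj : j < n) :
    ((i + (n-1-j)) % m = m-1) ↔ i = j % m := by
  have hb := Nat.div_add_mod j m
  have hblt : j % m < m := Nat.mod_lt _ (by omega)
  have hjK : j / m < K := by
    rw [Nat.div_lt_iff_lt_mul (show 0 < m by omega), Nat.mul_comm]
    omega
  have hdiv : m * (j/m) + m ≤ m * K := by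
    have h8 : m * (j/m + 1) ≤ m * K := Nat.mul_le_mul_left m hjK
    have h9 : m * (j/m + 1) = m * (j/m) + m := by ring
    omega
  have h7 : m * (K - j/m - 1) = m*K - m*(j/m) - m := by
    rw [Nat.mul_sub, Nat.mul_sub, Nat.mul_one]
  have hsplit : i + (n-1-j) = m * (K - j/m - 1) + (i + (m-1 - j%m)) := by omega
  rw [hsplit, Nat.mul_add_mod]
  rcases mod2 (show 0 < m by omega) (show i + (m-1-j%m) < 2*m by omega) with
    ⟨h1, h2⟩ | ⟨h1, h2⟩ <;> omega

lemma key3 (m n i j j' : ℕ) (hm : 3 ≤ m) (hn : 3 ≤ n) (hlt : m < n)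
    (hi : i < m) (hj : j < n) (hj' : j' < n) (hjj : j ≠ j') :
    (∃ T, ((j+T) % n = n-1 ∧ (j'+T) % n ≠ n-1 ∧ (i+T) % m ≠ m-1)
        ∨ ((j'+T) % n = n-1 ∧ (j+T) % n ≠ n-1 ∧ (i+T) % m ≠ m-1))
    ∨ (m ∣ n ∧ i = j % m ∧ i = j' % m) := by
  have h0n : 0 < n := by omega
  have acc_j : ∀ (y T : ℕ), y < n → (T = n-1-y ∨ T = n-1-y+n) → (y+T) % n = n-1 := by
    intro y T hy hT
    rcases hT with rfl | rfl
    · have h : y + (n-1-y) = n-1 := by omega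
      rw [h, Nat.mod_eq_of_lt (by omega)]
    · have h : y + (n-1-y+n) = (n-1) + n := by omega
      rw [h, Nat.add_mod_right, Nat.mod_eq_of_lt (by omega)]
  have rej_j : ∀ (y y' T : ℕ), y < n → y' < n → y ≠ y' → (T = n-1-y ∨ T = n-1-y+n) →
      (y'+T) % n ≠ n-1 := by
    intro y y' T hy hy' hne hT
    have key : (y' + (n-1-y)) % n ≠ n-1 := by
      rcases mod2 h0n (show y' + (n-1-y) < 2*n by omega) with ⟨h1,h2⟩|⟨h1,h2⟩ <;> omega
    rcases hT with rfl | rfl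
    · exact key
    · have h : y' + (n-1-y+n) = (y' + (n-1-y)) + n := by omega
      rw [h, Nat.add_mod_right]; exact key
  by_cases hc1 : (i + (n-1-j)) % m = m-1
  · by_cases hc2 : (i + ((n-1-j)+n)) % m = m-1
    · by_cases hc3 : (i + (n-1-j')) % m = m-1
      · right
        have hdvd : m ∣ n := by
          apply dvd_of_modshift m n (i + (n-1-j)) (by omega)
          have h : i + ((n-1-j)+n) = (i + (n-1-j)) + n := by omega
          rw [h] at hc2
          rw [hc2, hc1]
        obtain ⟨K, hK⟩ := hdvd
        exact ⟨⟨K, hK⟩, (sub1 m n i j K hm hK hi hj).mp hc1,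
          (sub1 m n i j' K hm hK hi hj').mp hc3⟩
      · exact Or.inl ⟨n-1-j', Or.inr ⟨acc_j j' _ hj' (Or.inl rfl),
          rej_j j' j _ hj' hj (Ne.symm hjj) (Or.inl rfl), hc3⟩⟩
    · exact Or.inl ⟨(n-1-j)+n, Or.inl ⟨acc_j j _ hj (Or.inr rfl),
        rej_j j j' _ hj hj' hjj (Or.inr rfl), hc2⟩⟩
  · exact Or.inl ⟨n-1-j, Or.inl ⟨acc_j j _ hj (Or.inl rfl),
      rej_j j j' _ hj hj' hjj (Or.inl rfl), hc1⟩⟩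

end SCAux

namespace SCAux

open SCPaper

lemma disting (m n : ℕ) (hm : 3 ≤ m) (hn : 3 ≤ n) (hlt : m < n) (h0m : 0 < m) (h0n : 0 < n)
    (i i' : Fin m) (j j' : Fin n) (hne : ¬(i = i' ∧ j = j')) :
    ∃ z : List (Fin 2),
      ¬((((U2dfa m h0m).evalFrom i z).val = m-1 ∨ ((U2dfa n h0n).evalFrom j z).val = n-1) ↔
        (((U2dfa m h0m).evalFrom i' z).val = m-1 ∨
         ((U2dfa n h0n).evalFrom j' z).val = n-1)) := by
  by_cases hii : i = i'
  · subst hii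
    have hjj : j.val ≠ j'.val := fun h => hne ⟨rfl, Fin.ext h⟩
    rcases key3 m n i.val j.val j'.val hm hn hlt i.isLt j.isLt j'.isLt hjj with
      ⟨T, hT⟩ | ⟨hdvd, hij, hij'⟩
    · refine ⟨aw T, ?_⟩
      rw [evalFrom_aw, evalFrom_aw, evalFrom_aw]
      rcases hT with ⟨h1,h2,h3⟩ | ⟨h1,h2,h3⟩ <;> tauto
    · obtain ⟨K, hK⟩ := hdvd
      have hbj := Nat.div_add_mod j.val m
      have hbj' := Nat.div_add_mod j'.val m
      have hjmlt : j.val % m < m := Nat.mod_lt _ h0m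
      have hjmlt' : j'.val % m < m := Nat.mod_lt _ h0m
      have hjlt := j.isLt
      have hjlt' := j'.isLt
      have hjK : j.val / m < K := by
        rw [Nat.div_lt_iff_lt_mul h0m, Nat.mul_comm]; omega
      have hjK' : j'.val / m < K := by
        rw [Nat.div_lt_iff_lt_mul h0m, Nat.mul_comm]; omega
      have hmulK : m * (j.val/m) + m ≤ m * K := by
        have h8 : m * (j.val/m + 1) ≤ m * K := Nat.mul_le_mul_left m hjK
        have h9 : m * (j.val/m + 1) = m * (j.val/m) + m := by ring
        omega
      have hmulK' : m * (j'.val/m) + m ≤ m * K := by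
        have h8 : m * (j'.val/m + 1) ≤ m * K := Nat.mul_le_mul_left m hjK'
        have h9 : m * (j'.val/m + 1) = m * (j'.val/m) + m := by ring
        omega
      set t := n - j.val with ht
      have e_t : i.val + t = m*K - m*(j.val/m) := by omega
      have hdvd1 : m ∣ (i.val + t) := by
        rw [e_t]; exact Nat.dvd_sub (dvd_mul_right m K) (dvd_mul_right m _)
      have hf1 : (i.val + t) % m = 0 := by
        obtain ⟨c, hc⟩ := hdvd1; rw [hc]; exact Nat.mul_mod_right m c
      have hf2 : (j.val + t) % n = 0 := by
        have h : j.val + t = n := by omega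
        rw [h, Nat.mod_self]
      set d := (j'.val + t) % n with hd
      have hd_lt : d < n := Nat.mod_lt _ h0n
      have e_x : j'.val + t = m*(j'.val/m) + m*K - m*(j.val/m) := by omega
      have hx_dvd : m ∣ (j'.val + t) := by
        rw [e_x]
        exact Nat.dvd_sub (Nat.dvd_add (dvd_mul_right m _) (dvd_mul_right m K))
          (dvd_mul_right m _)
      have hd_dvd : m ∣ d := by
        have h := Nat.div_add_mod (j'.val + t) n
        have h2 : d = (j'.val + t) - n * ((j'.val + t)/n) := by omega
        rw [h2]
        exact Nat.dvd_sub hx_dvd (dvd_mul_of_dvd_left ⟨K, hK⟩ _)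
      have hd_ne : d ≠ 0 := by
        intro h0
        have hx2 : (j'.val + t) % n = 0 := by rw [← hd]; exact h0
        rcases mod2 h0n (show j'.val + t < 2*n by omega) with ⟨h1,h2⟩|⟨h1,h2⟩ <;> omega
      have hd_ge : m ≤ d := Nat.le_of_dvd (by omega) hd_dvd
      set t₂ := 2*n - 1 - d with ht₂
      have e2 : 1 + t₂ = 2*n - d := by omega
      have hf4 : (1 + t₂) % m = 0 := by
        have hdd : m ∣ (2*n - d) :=
          Nat.dvd_sub (⟨2*K, by rw [hK]; ring⟩ : m ∣ 2*n) hd_dvd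
        obtain ⟨c, hc⟩ := hdd
        rw [e2, hc]; exact Nat.mul_mod_right m c
      have hf5 : (1 + t₂) % n = n - d := by
        rw [e2]
        rcases mod2 h0n (show 2*n - d < 2*n by omega) with ⟨h1,h2⟩|⟨h1,h2⟩ <;> omega
      have hf6 : (d + t₂) % n = n - 1 := by
        have h : d + t₂ = n - 1 + n := by omega
        rw [h, Nat.add_mod_right, Nat.mod_eq_of_lt (by omega)]
      have htpd : tpv d = d := by
        unfold tpv; rw [if_neg (by omega), if_neg (by omega)]
      refine ⟨aw t ++ [1] ++ aw t₂, ?_⟩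
      rw [eval_tbt m h0m hm, eval_tbt n h0n hn, eval_tbt n h0n hn, hf1, hf2, ← hd, htpd]
      have htpv0 : tpv 0 = 1 := rfl
      rw [htpv0, hf4, hf5, hf6]
      omega
  · have hiv : i.val ≠ i'.val := fun h => hii (Fin.ext h)
    obtain ⟨T, hT⟩ := key2 m n i.val i'.val j.val j'.val hm hn hlt i.isLt i'.isLt
      j.isLt j'.isLt hiv
    refine ⟨aw T, ?_⟩
    rw [evalFrom_aw, evalFrom_aw, evalFrom_aw, evalFrom_aw]
    rcases hT with ⟨h1,h2,h3,h4⟩ | ⟨h1,h2,h3,h4⟩ <;> tauto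

/- ## product and transport -/

lemma prod_evalFrom {α σ₁ σ₂ : Type} (M : DFA α σ₁) (N : DFA α σ₂)
    (acc : Set (σ₁ × σ₂)) (s : σ₁) (t : σ₂) (w : List α) :
    (prodDFA M N acc).evalFrom (s, t) w = (M.evalFrom s w, N.evalFrom t w) := by
  induction w generalizing s t with
  | nil => rfl
  | cons x w ih => exact ih (M.step s x) (N.step t x)

def transDFA {α σ τ : Type} (e : σ ≃ τ) (M : DFA α σ) : DFA α τ :=
  ⟨fun s x => e (M.step (e.symm s) x), e M.start, e.symm ⁻¹' M.accept⟩

lemma trans_evalFrom {α σ τ : Type} (e : σ ≃ τ) (M : DFA α σ) (s : σ) (w : List α) :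
    (transDFA e M).evalFrom (e s) w = e (M.evalFrom s w) := by
  induction w generalizing s with
  | nil => rfl
  | cons x w ih =>
    show (transDFA e M).evalFrom ((transDFA e M).step (e s) x) w = e (M.evalFrom (M.step s x) w)
    have h2 : (transDFA e M).step (e s) x = e (M.step s x) := by
      show e (M.step (e.symm (e s)) x) = e (M.step s x)
      rw [Equiv.symm_apply_apply]
    rw [h2, ih]

lemma trans_accepts {α σ τ : Type} (e : σ ≃ τ) (M : DFA α σ) :
    (transDFA e M).accepts = M.accepts := by
  ext w
  rw [DFA.mem_accepts, DFA.mem_accepts]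
  have h1 : (transDFA e M).eval w = e (M.eval w) := trans_evalFrom e M M.start w
  rw [h1]
  show e (M.eval w) ∈ e.symm ⁻¹' M.accept ↔ _
  rw [Set.mem_preimage, Equiv.symm_apply_apply]

/- ## upper and lower bounds -/

lemma upper (m n : ℕ) (h0m : 0 < m) (h0n : 0 < n) :
    (m*n) ∈ complexitySet (lunion (U2 m h0m) (U2 n h0n)) := by
  refine ⟨transDFA finProdFinEquiv (prodDFA (U2dfa m h0m) (U2dfa n h0n)
    {p : Fin m × Fin n | p.1.val = m-1 ∨ p.2.val = n-1}), ?_⟩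
  rw [trans_accepts]
  ext w
  rw [DFA.mem_accepts]
  have he : (prodDFA (U2dfa m h0m) (U2dfa n h0n)
      {p : Fin m × Fin n | p.1.val = m-1 ∨ p.2.val = n-1}).eval w
      = ((U2dfa m h0m).eval w, (U2dfa n h0n).eval w) :=
    prod_evalFrom _ _ _ _ _ w
  rw [he]
  exact Iff.rfl

lemma lower (m n : ℕ) (hm : 3 ≤ m) (hn : 3 ≤ n) (hlt : m < n) (h0m : 0 < m) (h0n : 0 < n)
    (k : ℕ) (hk : k ∈ complexitySet (lunion (U2 m h0m) (U2 n h0n))) : m * n ≤ k := by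
  obtain ⟨M, hM⟩ := hk
  have hw : ∀ p : Fin m × Fin n, ∃ w : List (Fin 2),
      (U2dfa m h0m).eval w = p.1 ∧ (U2dfa n h0n).eval w = p.2 :=
    fun p => reach m n hm hn hlt h0m h0n p.1 p.2
  choose w hw1 hw2 using hw
  have hchar : ∀ (q : Fin m × Fin n) (u : List (Fin 2)), (w q ++ u ∈ M.accepts) ↔
      (((U2dfa m h0m).evalFrom q.1 u).val = m-1 ∨
       ((U2dfa n h0n).evalFrom q.2 u).val = n-1) := by
    intro q u
    rw [hM]
    have e1 : (U2dfa m h0m).eval (w q ++ u) = (U2dfa m h0m).evalFrom q.1 u := by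
      have h : (U2dfa m h0m).eval (w q ++ u)
          = (U2dfa m h0m).evalFrom ((U2dfa m h0m).eval (w q)) u :=
        (U2dfa m h0m).evalFrom_of_append (U2dfa m h0m).start (w q) u
      rw [hw1 q] at h
      exact h
    have e2 : (U2dfa n h0n).eval (w q ++ u) = (U2dfa n h0n).evalFrom q.2 u := by
      have h : (U2dfa n h0n).eval (w q ++ u)
          = (U2dfa n h0n).evalFrom ((U2dfa n h0n).eval (w q)) u :=
        (U2dfa n h0n).evalFrom_of_append (U2dfa n h0n).start (w q) u
      rw [hw2 q] at h
      exact h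
    show (((U2dfa m h0m).eval (w q ++ u)).val = m-1 ∨
       ((U2dfa n h0n).eval (w q ++ u)).val = n-1) ↔ _
    rw [e1, e2]
  have hinj : Function.Injective (fun p => M.eval (w p)) := by
    intro p p' hpp
    have hpp' : M.eval (w p) = M.eval (w p') := hpp
    by_contra hne
    have hne' : ¬(p.1 = p'.1 ∧ p.2 = p'.2) := by
      intro ⟨h1, h2⟩; exact hne (Prod.ext h1 h2)
    obtain ⟨z, hz⟩ := disting m n hm hn hlt h0m h0n p.1 p'.1 p.2 p'.2 hne'
    apply hz
    have key : (w p ++ z ∈ M.accepts) ↔ (w p' ++ z ∈ M.accepts) := by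
      rw [DFA.mem_accepts, DFA.mem_accepts]
      have e1 : M.eval (w p ++ z) = M.evalFrom (M.eval (w p)) z :=
        M.evalFrom_of_append _ _ _
      have e2 : M.eval (w p' ++ z) = M.evalFrom (M.eval (w p')) z :=
        M.evalFrom_of_append _ _ _
      rw [e1, e2, hpp']
    exact (hchar p z).symm.trans (key.trans (hchar p' z))
  have hcard := Fintype.card_le_of_injective _ hinj
  simpa using hcard

lemma main_lt (m n : ℕ) (hm : 3 ≤ m) (hn : 3 ≤ n) (hlt : m < n) (h0m : 0 < m) (h0n : 0 < n) :
    sc (lunion (U2 m h0m) (U2 n h0n)) = m * n := by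
  have hmem := upper m n h0m h0n
  apply le_antisymm
  · exact Nat.sInf_le hmem
  · exact le_csInf ⟨_, hmem⟩ (fun k hk => lower m n hm hn hlt h0m h0n k hk)

lemma lunion_comm {α : Type} (K L : Language α) : lunion K L = lunion L K :=
  Set.ext fun _ => or_comm

end SCAux

open SCPaper

open SCPaper

theorem union_same_stream_tight (m n : ℕ) (hm : 3 ≤ m) (hn : 3 ≤ n) (hmn : m ≠ n) :
    sc (lunion (U2 m (by omega)) (U2 n (by omega))) = m * n := by
  rcases Nat.lt_or_ge m n with hlt | hge
  · exact SCAux.main_lt m n hm hn hlt (by omega) (by omega)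
  · have hlt : n < m := by omega
    calc sc (lunion (U2 m (by omega)) (U2 n (by omega)))
        = sc (lunion (U2 n (by omega)) (U2 m (by omega))) := by
          rw [SCAux.lunion_comm]
      _ = n * m := SCAux.main_lt n m hn hm hlt (by omega) (by omega)
      _ = m * n := Nat.mul_comm n m
end
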